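/- If A ⊂_p B (sup A ≤ sup B), then every element of A belongs to the Torra intersection A ∩ B, and consequently either A ⊂_s (A ∩ B) or A ⊂_t (A ∩ B) holds. -/

import Mathlib

/-- Supremum (maximum) of a multiset of reals in `[0,1]`, defaulting to `0`. -/
noncomputable def msup (A : Multiset ℝ) : ℝ := A.toList.foldr max 0

/-- Infimum (minimum) of a multiset of reals in `[0,1]`, defaulting to `1`. -/
noncomputable def minf (A : Multiset ℝ) : ℝ := A.toList.foldr min 1

/-- Mean of a multiset of reals. -/
noncomputable def mmean (A : Multiset ℝ) : ℝ := A.sum / A.card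

/-- The elements of a multiset sorted in descending order. -/
noncomputable def dsort (A : Multiset ℝ) : List ℝ := (A.sort (· ≤ ·)).reverse

/-- `A ⊂ₛ B`: `|A| ≥ |B|` and the `i`-th largest element of `B` is at least the
`i`-th largest element of `A`, for `i ≤ |B|`. -/
noncomputable def subS (A B : Multiset ℝ) : Prop :=
  B.card ≤ A.card ∧ ∀ i < B.card, (dsort A).getD i 0 ≤ (dsort B).getD i 0

/-- `A ⊂ₜ B`: `|A| < |B|` and the `i`-th largest element of `B` is at least the
`i`-th largest element of `A`, for `i ≤ |A|`. -/
noncomputable def subT (A B : Multiset ℝ) : Prop :=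
  A.card < B.card ∧ ∀ i < A.card, (dsort A).getD i 0 ≤ (dsort B).getD i 0

/-- Torra intersection of two hesitant fuzzy elements (as multisets). -/
noncomputable def tInter (A B : Multiset ℝ) : Multiset ℝ :=
  (A + B).filter (fun h => h ≤ min (msup A) (msup B))

/-- Torra union of two hesitant fuzzy elements (as multisets). -/
noncomputable def tUnion (A B : Multiset ℝ) : Multiset ℝ :=
  (A + B).filter (fun h => max (minf A) (minf B) ≤ h)

lemma mem_le_foldr {a : ℝ} : ∀ l : List ℝ, a ∈ l → a ≤ l.foldr max 0
  | b :: l, h => by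
    rcases List.mem_cons.1 h with h | h
    · simp [h, le_max_iff]
    · exact le_trans (mem_le_foldr l h) (by simp [le_max_iff])

lemma mem_le_msup {A : Multiset ℝ} {a : ℝ} (h : a ∈ A) : a ≤ msup A :=
  mem_le_foldr _ (by rwa [Multiset.mem_toList])

lemma sublist_getD {l l' : List ℝ} (hs : List.Sublist l l') :
    l.Pairwise (· ≥ ·) → l'.Pairwise (· ≥ ·) → ∀ i < l.length, l.getD i 0 ≤ l'.getD i 0 := by
  induction hs with
  | slnil => intro _ _ i hi; simp at hi
  | cons a h ih =>
    rename_i l₁ l₂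
    intro hl hl' i hi
    have h1 := ih hl hl'.of_cons i hi
    refine h1.trans ?_
    have hlen : i < l₂.length := lt_of_lt_of_le hi h.length_le
    cases i with
    | zero =>
      simp only [List.getD_cons_zero]
      rw [List.getD_eq_getElem _ _ hlen]
      exact List.rel_of_pairwise_cons hl' (List.getElem_mem _)
    | succ n =>
      simp only [List.getD_cons_succ]
      rw [List.getD_eq_getElem _ _ hlen,
        List.getD_eq_getElem _ _ (Nat.lt_of_succ_lt hlen)]
      exact List.Pairwise.rel_get_of_le hl'.of_cons (by simpa using Nat.le_succ n)
  | cons_cons a h ih =>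
    intro hl hl' i hi
    cases i with
    | zero => simp
    | succ n =>
      simp only [List.getD_cons_succ]
      exact ih hl.of_cons hl'.of_cons n (by simpa using hi)

lemma dsort_getD_le {A C : Multiset ℝ} (h : A ≤ C) :
    ∀ i < A.card, (dsort A).getD i 0 ≤ (dsort C).getD i 0 := by
  have hsub : List.Subperm (A.sort (· ≤ ·)) (C.sort (· ≤ ·)) := by
    rw [← Multiset.coe_le, Multiset.sort_eq, Multiset.sort_eq]; exact h
  have hsl : List.Sublist (A.sort (· ≤ ·)) (C.sort (· ≤ ·)) :=
    List.sublist_of_subperm_of_pairwise hsub (Multiset.pairwise_sort _ _)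
      (Multiset.pairwise_sort _ _)
  have hrev : List.Sublist (dsort A) (dsort C) := hsl.reverse
  intro i hi
  have hA : (dsort A).Pairwise (· ≥ ·) := by
    unfold dsort; exact List.pairwise_reverse.2 (by simpa using Multiset.pairwise_sort _ _)
  have hC : (dsort C).Pairwise (· ≥ ·) := by
    unfold dsort; exact List.pairwise_reverse.2 (by simpa using Multiset.pairwise_sort _ _)
  exact sublist_getD hrev hA hC i (by
    simpa [dsort, Multiset.length_sort] using hi)

theorem stmt10 (A B : Multiset ℝ) (hA : A ≠ 0) (hB : B ≠ 0)
    (hA1 : ∀ x ∈ A, x ∈ Set.Icc (0:ℝ) 1) (hB1 : ∀ x ∈ B, x ∈ Set.Icc (0:ℝ) 1)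
    (hp : msup A ≤ msup B) :
    (∀ a ∈ A, a ∈ tInter A B) ∧ (subS A (tInter A B) ∨ subT A (tInter A B)) := by
  have hmin : min (msup A) (msup B) = msup A := min_eq_left hp
  have hmem : ∀ a ∈ A, a ∈ tInter A B := by
    intro a ha
    rw [tInter, Multiset.mem_filter]
    exact ⟨Multiset.mem_add.2 (Or.inl ha), by rw [hmin]; exact mem_le_msup ha⟩
  refine ⟨hmem, ?_⟩
  have hle : A ≤ tInter A B := by
    have : A.filter (fun h => h ≤ min (msup A) (msup B)) = A := by
      rw [Multiset.filter_eq_self]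
      intro a ha; rw [hmin]; exact mem_le_msup ha
    calc A = A.filter (fun h => h ≤ min (msup A) (msup B)) := this.symm
      _ ≤ tInter A B := by
          rw [tInter, Multiset.filter_add]
          exact Multiset.le_add_right _ _
  have hcard := Multiset.card_le_card hle
  rcases lt_or_eq_of_le hcard with hlt | heq
  · exact Or.inr ⟨hlt, dsort_getD_le hle⟩
  · left
    refine ⟨le_of_eq heq.symm, ?_⟩
    intro i hi
    exact dsort_getD_le hle i (by omega)
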